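/- Let H be a weak Hopf algebra and A a left H-module algebra. Then the smash product A # H := A ⊗_{H_t} H, with multiplication (a # h)(a' # h') = a(h₁·a') # h₂h' and unit 1_A # 1_H, is a unital associative algebra. -/

import Mathlib

open TensorProduct LinearMap

/-- A weak Hopf algebra over a commutative ring `k`: a `k`-algebra `H` equipped with a
coassociative counital comultiplication which is multiplicative, satisfying the weak
comultiplication axiom `Δ²(1) = (Δ(1)⊗1)(1⊗Δ(1)) = (1⊗Δ(1))(Δ(1)⊗1)`, the weak counit axiom
`ε(xyz) = ε(xy₁)ε(y₂z) = ε(xy₂)ε(y₁z)`, and an antipode satisfying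
`h₁S(h₂) = ε(1₁h)1₂`, `S(h₁)h₂ = 1₁ε(h1₂)` and `S(h₁)h₂S(h₃) = S(h)`. -/
structure WeakHopfAlgebra (k H : Type*) [CommRing k] [Ring H] [Algebra k H] where
  comul : H →ₗ[k] H ⊗[k] H
  counit : H →ₗ[k] k
  antipode : H →ₗ[k] H
  comul_coassoc : (TensorProduct.assoc k H H H).toLinearMap ∘ₗ
      (LinearMap.rTensor H comul) ∘ₗ comul = (LinearMap.lTensor H comul) ∘ₗ comul
  counit_comul : (TensorProduct.lid k H).toLinearMap ∘ₗ
      (LinearMap.rTensor H counit) ∘ₗ comul = LinearMap.id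
  comul_counit : (TensorProduct.rid k H).toLinearMap ∘ₗ
      (LinearMap.lTensor H counit) ∘ₗ comul = LinearMap.id
  comul_mul : ∀ x y : H, comul (x * y) = comul x * comul y
  comul_one_left : (LinearMap.rTensor H comul) (comul 1)
      = (comul 1 ⊗ₜ[k] (1 : H)) * ((TensorProduct.assoc k H H H).symm ((1 : H) ⊗ₜ[k] comul 1))
  comul_one_right : (LinearMap.rTensor H comul) (comul 1)
      = ((TensorProduct.assoc k H H H).symm ((1 : H) ⊗ₜ[k] comul 1)) * (comul 1 ⊗ₜ[k] (1 : H))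
  counit_mul_left : ∀ x y z : H, counit (x * y * z)
      = LinearMap.mul' k k ((TensorProduct.map (counit ∘ₗ LinearMap.mulLeft k x)
          (counit ∘ₗ LinearMap.mulRight k z)) (comul y))
  counit_mul_right : ∀ x y z : H, counit (x * y * z)
      = LinearMap.mul' k k ((TensorProduct.map (counit ∘ₗ LinearMap.mulRight k z)
          (counit ∘ₗ LinearMap.mulLeft k x)) (comul y))
  antipode_right : ∀ h : H,
      LinearMap.mul' k H ((LinearMap.lTensor H antipode) (comul h))
        = (TensorProduct.lid k H) ((LinearMap.rTensor H
            (counit ∘ₗ LinearMap.mulRight k h)) (comul 1))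
  antipode_left : ∀ h : H,
      LinearMap.mul' k H ((LinearMap.rTensor H antipode) (comul h))
        = (TensorProduct.rid k H) ((LinearMap.lTensor H
            (counit ∘ₗ LinearMap.mulLeft k h)) (comul 1))
  antipode_mid : ∀ h : H,
      LinearMap.mul' k H ((TensorProduct.map
          (LinearMap.mul' k H ∘ₗ LinearMap.rTensor H antipode) antipode)
            ((LinearMap.rTensor H comul) (comul h))) = antipode h

namespace WeakHopfAlgebra

variable {k H : Type*} [CommRing k] [Ring H] [Algebra k H]

/-- The target map `ε_t(h) = ε(1₁h)1₂`. -/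
noncomputable def εt (W : WeakHopfAlgebra k H) : H →ₗ[k] H :=
  (TensorProduct.lid k H).toLinearMap ∘ₗ (LinearMap.rTensor H W.counit) ∘ₗ
    (LinearMap.mulLeft k (W.comul 1)) ∘ₗ ((TensorProduct.mk k H H).flip 1)

/-- The source map `ε_s(h) = 1₁ε(h1₂)`. -/
noncomputable def εs (W : WeakHopfAlgebra k H) : H →ₗ[k] H :=
  (TensorProduct.rid k H).toLinearMap ∘ₗ (LinearMap.lTensor H W.counit) ∘ₗ
    (LinearMap.mulRight k (W.comul 1)) ∘ₗ ((TensorProduct.mk k H H) 1)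

end WeakHopfAlgebra

namespace WeakHopfAlgebra

variable {k H : Type*} [CommRing k] [Ring H] [Algebra k H]

/-- The subspace of relations defining the relative tensor product `A ⊗_{H_t} H`
underlying the smash product `A # H`: it is spanned by the elements
`(a·z) ⊗ h - a ⊗ (zh)` for `z ∈ H_t`, where `a·z := a (z·1_A)`. -/
noncomputable def smashRel (W : WeakHopfAlgebra k H) {A : Type*} [AddCommGroup A] [Module k A]
    (mulA : A →ₗ[k] A →ₗ[k] A) (oneA : A) (act : H →ₗ[k] A →ₗ[k] A) :
    Submodule k (A ⊗[k] H) :=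
  Submodule.span k {x | ∃ (a : A) (h z : H), z ∈ Set.range W.εt ∧
    x = (mulA a (act z oneA)) ⊗ₜ[k] h - a ⊗ₜ[k] (z * h)}

end WeakHopfAlgebra

namespace WeakHopfSmashAux

variable {k : Type*} [CommRing k]

lemma exists_rep {M N : Type*} [AddCommGroup M] [AddCommGroup N] [Module k M] [Module k N]
    (t : M ⊗[k] N) : ∃ (n : ℕ) (f : Fin n → M) (g : Fin n → N), t = ∑ i, f i ⊗ₜ[k] g i := by
  induction t using TensorProduct.induction_on with
  | zero => exact ⟨0, Fin.elim0, Fin.elim0, by simp⟩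
  | tmul x y => exact ⟨1, fun _ => x, fun _ => y, by simp⟩
  | add x y hx hy =>
    obtain ⟨n, f, g, rfl⟩ := hx
    obtain ⟨m, f', g', rfl⟩ := hy
    refine ⟨n + m, Fin.append f f', Fin.append g g', ?_⟩
    rw [Fin.sum_univ_add]
    simp [Fin.append_left, Fin.append_right]

variable {H : Type*} [Ring H] [Algebra k H]

section Identities

variable (W : WeakHopfAlgebra k H)

/-- Collapse `ε` on the first tensor factor. -/
noncomputable def rho : H ⊗[k] H →ₗ[k] H :=
  (TensorProduct.lid k H).toLinearMap ∘ₗ rTensor H W.counit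

/-- Collapse `ε` on the second tensor factor. -/
noncomputable def rho' : H ⊗[k] H →ₗ[k] H :=
  (TensorProduct.rid k H).toLinearMap ∘ₗ lTensor H W.counit

@[simp] lemma rho_tmul (x y : H) : rho W (x ⊗ₜ[k] y) = W.counit x • y := by
  simp [rho]

@[simp] lemma rho'_tmul (x y : H) : rho' W (x ⊗ₜ[k] y) = W.counit y • x := by
  simp [rho']

lemma rho_comul (x : H) : rho W (W.comul x) = x := by
  have := LinearMap.congr_fun W.counit_comul x
  simpa [rho] using this

lemma rho'_comul (x : H) : rho' W (W.comul x) = x := by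
  have := LinearMap.congr_fun W.comul_counit x
  simpa [rho'] using this

/-- Contraction `x ⊗ y ↦ ε(xw) • y`. -/
noncomputable def ctr (w : H) : H ⊗[k] H →ₗ[k] H :=
  rho W ∘ₗ rTensor H (LinearMap.mulRight k w)

@[simp] lemma ctr_tmul (w x y : H) : ctr W w (x ⊗ₜ[k] y) = W.counit (x * w) • y := by
  simp [ctr]

lemma coassoc_apply (x : H) :
    (TensorProduct.assoc k H H H) (rTensor H W.comul (W.comul x))
      = lTensor H W.comul (W.comul x) := by
  have := LinearMap.congr_fun W.comul_coassoc x
  simpa using this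

variable {n1 : ℕ} {e1 e2 : Fin n1 → H}

lemma εt_rep (he : W.comul 1 = ∑ i, e1 i ⊗ₜ[k] e2 i) (w : H) :
    W.εt w = ∑ i, W.counit (e1 i * w) • e2 i := by
  simp only [WeakHopfAlgebra.εt, LinearMap.comp_apply, LinearEquiv.coe_coe, flip_apply,
    TensorProduct.mk_apply, mulLeft_apply, he, Finset.sum_mul,
    Algebra.TensorProduct.tmul_mul_tmul, mul_one, map_sum, rTensor_tmul, lid_tmul]

lemma wk_right (he : W.comul 1 = ∑ i, e1 i ⊗ₜ[k] e2 i) (x z : H) :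
    W.counit (x * z) = ∑ i, W.counit (e1 i * z) * W.counit (x * e2 i) := by
  have h := W.counit_mul_right x 1 z
  rw [mul_one, he] at h
  simpa [map_sum, LinearMap.comp_apply] using h

lemma wk_left (he : W.comul 1 = ∑ i, e1 i ⊗ₜ[k] e2 i) (x z : H) :
    W.counit (x * z) = ∑ i, W.counit (x * e1 i) * W.counit (e2 i * z) := by
  have h := W.counit_mul_left x 1 z
  rw [mul_one, he] at h
  simpa [map_sum, LinearMap.comp_apply] using h

lemma S1' (he : W.comul 1 = ∑ i, e1 i ⊗ₜ[k] e2 i) :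
    lTensor H W.comul (W.comul 1)
      = ∑ i, ∑ j, e1 j ⊗ₜ[k] ((e1 i * e2 j) ⊗ₜ[k] e2 i) := by
  rw [← coassoc_apply, W.comul_one_right]
  conv_lhs => rw [he]
  simp only [tmul_sum, map_sum, assoc_symm_tmul, sum_tmul, Finset.sum_mul, Finset.mul_sum,
    Algebra.TensorProduct.tmul_mul_tmul, one_mul, mul_one, assoc_tmul]
  rw [Finset.sum_comm]

lemma S1'' (he : W.comul 1 = ∑ i, e1 i ⊗ₜ[k] e2 i) :
    lTensor H W.comul (W.comul 1)
      = ∑ i, ∑ j, e1 i ⊗ₜ[k] ((e2 i * e1 j) ⊗ₜ[k] e2 j) := by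
  rw [← coassoc_apply, W.comul_one_left]
  conv_lhs => rw [he]
  simp only [tmul_sum, map_sum, assoc_symm_tmul, sum_tmul, Finset.sum_mul, Finset.mul_sum,
    Algebra.TensorProduct.tmul_mul_tmul, one_mul, mul_one, assoc_tmul]
  rw [Finset.sum_comm]

end Identities

section Identities2

variable (W : WeakHopfAlgebra k H)
variable {n1 : ℕ} {e1 e2 : Fin n1 → H}

lemma Qprime (he : W.comul 1 = ∑ i, e1 i ⊗ₜ[k] e2 i)
    {m : ℕ} {g1 g2 : Fin m → H} (g : H) (hg : W.comul g = ∑ a, g1 a ⊗ₜ[k] g2 a) :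
    ∑ i, ∑ a, W.counit (g1 a * e2 i) • (e1 i ⊗ₜ[k] g2 a)
      = ∑ i, e1 i ⊗ₜ[k] (g * e2 i) := by
  have h1 : ((1:H) ⊗ₜ[k] W.comul 1) * (∑ i, e1 i ⊗ₜ[k] (e2 i ⊗ₜ[k] (1:H)))
      = lTensor H W.comul (W.comul 1) := by
    rw [S1' W he]
    conv_lhs => rw [he]
    simp only [tmul_sum, sum_tmul, Finset.sum_mul, Finset.mul_sum,
      Algebra.TensorProduct.tmul_mul_tmul, one_mul, mul_one]
    rw [Finset.sum_comm]
  have hgg : ((1:H) ⊗ₜ[k] W.comul g) * ((1:H) ⊗ₜ[k] W.comul 1) = ((1:H) ⊗ₜ[k] W.comul g) := by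
    rw [Algebra.TensorProduct.tmul_mul_tmul, one_mul, ← W.comul_mul, mul_one]
  have h2 : ((1:H) ⊗ₜ[k] W.comul g) * (∑ i, e1 i ⊗ₜ[k] (e2 i ⊗ₜ[k] (1:H)))
      = ∑ i, e1 i ⊗ₜ[k] W.comul (g * e2 i) := by
    calc ((1:H) ⊗ₜ[k] W.comul g) * (∑ i, e1 i ⊗ₜ[k] (e2 i ⊗ₜ[k] (1:H)))
        = (((1:H) ⊗ₜ[k] W.comul g) * ((1:H) ⊗ₜ[k] W.comul 1))
            * (∑ i, e1 i ⊗ₜ[k] (e2 i ⊗ₜ[k] (1:H))) := by rw [hgg]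
      _ = ((1:H) ⊗ₜ[k] W.comul g)
            * (((1:H) ⊗ₜ[k] W.comul 1) * (∑ i, e1 i ⊗ₜ[k] (e2 i ⊗ₜ[k] (1:H)))) :=
          mul_assoc _ _ _
      _ = ((1:H) ⊗ₜ[k] W.comul g) * (lTensor H W.comul (W.comul 1)) := by rw [h1]
      _ = ∑ i, e1 i ⊗ₜ[k] W.comul (g * e2 i) := by
          conv_lhs => rw [he]
          simp only [map_sum, lTensor_tmul, Finset.mul_sum,
            Algebra.TensorProduct.tmul_mul_tmul, one_mul, ← W.comul_mul]
  have h3 : ((1:H) ⊗ₜ[k] W.comul g) * (∑ i, e1 i ⊗ₜ[k] (e2 i ⊗ₜ[k] (1:H)))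
      = ∑ i, ∑ a, e1 i ⊗ₜ[k] ((g1 a * e2 i) ⊗ₜ[k] g2 a) := by
    rw [hg]
    simp only [tmul_sum, sum_tmul, Finset.sum_mul, Finset.mul_sum,
      Algebra.TensorProduct.tmul_mul_tmul, one_mul, mul_one]
    try rw [Finset.sum_comm]
  have h4 := congrArg (lTensor H (rho W)) (h3.symm.trans h2)
  simpa only [map_sum, lTensor_tmul, rho_tmul, rho_comul, tmul_smul] using h4

lemma X_lemma (he : W.comul 1 = ∑ i, e1 i ⊗ₜ[k] e2 i)
    {m : ℕ} {g1 g2 : Fin m → H} (g : H) (hg : W.comul g = ∑ a, g1 a ⊗ₜ[k] g2 a) (w : H) :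
    ∑ a, W.counit (g1 a * w) • g2 a = g * W.εt w := by
  have h4 := congrArg (ctr W w) (Qprime W he g hg)
  simp only [map_sum, map_smul, ctr_tmul, smul_smul] at h4
  calc ∑ a, W.counit (g1 a * w) • g2 a
      = ∑ a, ∑ i, (W.counit (e1 i * w) * W.counit (g1 a * e2 i)) • g2 a := by
        refine Finset.sum_congr rfl fun a _ => ?_
        rw [← Finset.sum_smul, ← wk_right W he]
    _ = ∑ i, ∑ a, (W.counit (g1 a * e2 i) * W.counit (e1 i * w)) • g2 a := by
        rw [Finset.sum_comm]
        simp only [mul_comm]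
    _ = ∑ i, W.counit (e1 i * w) • (g * e2 i) := h4
    _ = g * W.εt w := by
        rw [εt_rep W he, Finset.mul_sum]
        simp only [mul_smul_comm]

lemma εt_idem (he : W.comul 1 = ∑ i, e1 i ⊗ₜ[k] e2 i) (w : H) :
    W.εt (W.εt w) = W.εt w := by
  conv_lhs => rw [εt_rep W he (W.εt w)]
  conv_rhs => rw [εt_rep W he w]
  refine Finset.sum_congr rfl fun i _ => ?_
  congr 1
  conv_lhs => rw [εt_rep W he w]
  rw [Finset.mul_sum, map_sum]
  simp only [mul_smul_comm, map_smul, smul_eq_mul]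
  rw [← wk_right W he]

lemma sum_εt_mul (he : W.comul 1 = ∑ i, e1 i ⊗ₜ[k] e2 i)
    {m : ℕ} {g1 g2 : Fin m → H} (g : H) (hg : W.comul g = ∑ a, g1 a ⊗ₜ[k] g2 a) (w : H) :
    ∑ a, W.εt (g1 a * W.εt w) * g2 a = g * W.εt w := by
  have e2' : W.comul 1 * W.comul g = W.comul g := by rw [← W.comul_mul, one_mul]
  have e3 : ctr W (W.εt w) (W.comul 1 * W.comul g)
      = ∑ a, ∑ i, W.counit (e1 i * (g1 a * W.εt w)) • (e2 i * g2 a) := by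
    rw [he, hg, Finset.sum_mul_sum]
    simp only [Algebra.TensorProduct.tmul_mul_tmul, map_sum, ctr_tmul, mul_assoc]
    rw [Finset.sum_comm]
  have e4 : ctr W (W.εt w) (W.comul g) = g * W.εt (W.εt w) := by
    rw [hg]
    simp only [map_sum, ctr_tmul]
    exact X_lemma W he g hg (W.εt w)
  rw [e2'] at e3
  rw [e4, εt_idem W he] at e3
  calc ∑ a, W.εt (g1 a * W.εt w) * g2 a
      = ∑ a, ∑ i, W.counit (e1 i * (g1 a * W.εt w)) • (e2 i * g2 a) := by
        refine Finset.sum_congr rfl fun a _ => ?_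
        rw [εt_rep W he, Finset.sum_mul]
        simp only [smul_mul_assoc]
    _ = g * W.εt w := e3.symm

lemma I2_one (he : W.comul 1 = ∑ i, e1 i ⊗ₜ[k] e2 i) :
    ∑ i, e1 i ⊗ₜ[k] W.εt (e2 i) = W.comul 1 := by
  have h := congrArg (rTensor H (rho' W)) W.comul_one_right
  have hL : rTensor H (rho' W) (rTensor H W.comul (W.comul 1)) = W.comul 1 := by
    conv_lhs => rw [he]
    simp only [map_sum, rTensor_tmul, rho'_comul]
    exact he.symm
  have hR : rTensor H (rho' W)
      (((TensorProduct.assoc k H H H).symm ((1 : H) ⊗ₜ[k] W.comul 1)) * (W.comul 1 ⊗ₜ[k] (1 : H)))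
      = ∑ i, ∑ j, W.counit (e1 i * e2 j) • (e1 j ⊗ₜ[k] e2 i) := by
    rw [he]
    simp only [tmul_sum, map_sum, assoc_symm_tmul, sum_tmul, Finset.sum_mul, Finset.mul_sum,
      Algebra.TensorProduct.tmul_mul_tmul, one_mul, mul_one, rTensor_tmul, rho'_tmul,
      smul_tmul, tmul_smul]
    try rw [Finset.sum_comm]
  have hA : ∑ i, e1 i ⊗ₜ[k] W.εt (e2 i)
      = ∑ i, ∑ j, W.counit (e1 j * e2 i) • (e1 i ⊗ₜ[k] e2 j) := by
    refine Finset.sum_congr rfl fun i _ => ?_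
    rw [εt_rep W he, tmul_sum]
    simp only [tmul_smul]
  rw [hL, hR] at h
  rw [hA, h, Finset.sum_comm]

lemma εt_mul_sum (he : W.comul 1 = ∑ i, e1 i ⊗ₜ[k] e2 i)
    {m : ℕ} {g1 g2 : Fin m → H} (g : H) (hg : W.comul g = ∑ a, g1 a ⊗ₜ[k] g2 a) :
    ∑ a, W.εt (g1 a) * g2 a = g := by
  have e1' : W.comul 1 * W.comul g = W.comul g := by rw [← W.comul_mul, one_mul]
  have e3 : rho W (W.comul 1 * W.comul g)
      = ∑ a, ∑ i, W.counit (e1 i * g1 a) • (e2 i * g2 a) := by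
    rw [he, hg, Finset.sum_mul_sum]
    simp only [Algebra.TensorProduct.tmul_mul_tmul, map_sum, rho_tmul]
    rw [Finset.sum_comm]
  rw [e1', rho_comul] at e3
  calc ∑ a, W.εt (g1 a) * g2 a
      = ∑ a, ∑ i, W.counit (e1 i * g1 a) • (e2 i * g2 a) := by
        refine Finset.sum_congr rfl fun a _ => ?_
        rw [εt_rep W he, Finset.sum_mul]
        simp only [smul_mul_assoc]
    _ = g := e3.symm

noncomputable def gam (W : WeakHopfAlgebra k H) (w : H) : H ⊗[k] (H ⊗[k] H) →ₗ[k] H ⊗[k] H :=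
  (TensorProduct.lid k (H ⊗[k] H)).toLinearMap ∘ₗ
    rTensor (H ⊗[k] H) (W.counit ∘ₗ LinearMap.mulRight k w)

@[simp] lemma gam_tmul (w x : H) (t : H ⊗[k] H) :
    gam W w (x ⊗ₜ[k] t) = W.counit (x * w) • t := by
  simp [gam]

lemma KH1a (he : W.comul 1 = ∑ i, e1 i ⊗ₜ[k] e2 i) (w : H) :
    W.comul (W.εt w) = W.comul 1 * (W.εt w ⊗ₜ[k] (1:H)) := by
  have h := congrArg (gam W w) (S1' W he)
  have hL : gam W w (lTensor H W.comul (W.comul 1)) = W.comul (W.εt w) := by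
    conv_lhs => rw [he]
    simp only [map_sum, lTensor_tmul, gam_tmul]
    rw [εt_rep W he w, map_sum]
    simp only [map_smul]
  have hR : gam W w (∑ i, ∑ j, e1 j ⊗ₜ[k] ((e1 i * e2 j) ⊗ₜ[k] e2 i))
      = ∑ i, ∑ j, W.counit (e1 j * w) • ((e1 i * e2 j) ⊗ₜ[k] e2 i) := by
    simp only [map_sum, gam_tmul]
  have hT : W.comul 1 * (W.εt w ⊗ₜ[k] (1:H))
      = ∑ i, ∑ j, W.counit (e1 j * w) • ((e1 i * e2 j) ⊗ₜ[k] e2 i) := by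
    rw [he, εt_rep W he w]
    simp only [sum_tmul, smul_tmul', Finset.mul_sum, Finset.sum_mul,
      Algebra.TensorProduct.tmul_mul_tmul, mul_one, mul_smul_comm, smul_mul_assoc]
    try rw [Finset.sum_comm]
  rw [hL, hR] at h
  rw [h, hT]

lemma KH1b (he : W.comul 1 = ∑ i, e1 i ⊗ₜ[k] e2 i) (w : H) :
    W.comul (W.εt w) = (W.εt w ⊗ₜ[k] (1:H)) * W.comul 1 := by
  have h := congrArg (gam W w) (S1'' W he)
  have hL : gam W w (lTensor H W.comul (W.comul 1)) = W.comul (W.εt w) := by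
    conv_lhs => rw [he]
    simp only [map_sum, lTensor_tmul, gam_tmul]
    rw [εt_rep W he w, map_sum]
    simp only [map_smul]
  have hR : gam W w (∑ i, ∑ j, e1 i ⊗ₜ[k] ((e2 i * e1 j) ⊗ₜ[k] e2 j))
      = ∑ i, ∑ j, W.counit (e1 i * w) • ((e2 i * e1 j) ⊗ₜ[k] e2 j) := by
    simp only [map_sum, gam_tmul]
  have hT : (W.εt w ⊗ₜ[k] (1:H)) * W.comul 1
      = ∑ i, ∑ j, W.counit (e1 i * w) • ((e2 i * e1 j) ⊗ₜ[k] e2 j) := by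
    rw [he, εt_rep W he w]
    simp only [sum_tmul, smul_tmul', Finset.mul_sum, Finset.sum_mul,
      Algebra.TensorProduct.tmul_mul_tmul, one_mul, mul_smul_comm, smul_mul_assoc]
    try rw [Finset.sum_comm]
  rw [hL, hR] at h
  rw [h, hT]

lemma comul_εt_mul (he : W.comul 1 = ∑ i, e1 i ⊗ₜ[k] e2 i) (w x : H) :
    W.comul (W.εt w * x) = (W.εt w ⊗ₜ[k] (1:H)) * W.comul x := by
  rw [W.comul_mul, KH1b W he, mul_assoc, ← W.comul_mul, one_mul]

end Identities2

section Smash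

variable (W : WeakHopfAlgebra k H)
variable {A : Type*} [Ring A] [Algebra k A] (act : H →ₗ[k] A →ₗ[k] A)

/-- `Φ (u ⊗ v) (a' ⊗ h') = (u · a') ⊗ (v h')`. -/
noncomputable def Phi : (H ⊗[k] H) →ₗ[k] (A ⊗[k] H) →ₗ[k] (A ⊗[k] H) :=
  (TensorProduct.homTensorHomMap (RingHom.id k) A H A H) ∘ₗ TensorProduct.map act (LinearMap.mul k H)

@[simp] lemma Phi_tmul_tmul (u v : H) (a' : A) (h' : H) :
    Phi act (u ⊗ₜ[k] v) (a' ⊗ₜ[k] h') = act u a' ⊗ₜ[k] (v * h') := by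
  simp [Phi]

/-- The smash multiplication on `A ⊗ H`:
`m₀ (a ⊗ h) (a' ⊗ h') = ∑ (a (h₁ · a')) ⊗ (h₂ h')`. -/
noncomputable def mZero : (A ⊗[k] H) →ₗ[k] (A ⊗[k] H) →ₗ[k] (A ⊗[k] H) :=
  TensorProduct.lift ((LinearMap.llcomp k (A ⊗[k] H) (A ⊗[k] H) (A ⊗[k] H)).compl₁₂
    ((LinearMap.rTensorHom H) ∘ₗ LinearMap.mul k A) ((Phi act) ∘ₗ W.comul))

lemma mZero_apply (a : A) (h : H) (y : A ⊗[k] H) :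
    mZero W act (a ⊗ₜ[k] h) y
      = rTensor H (LinearMap.mul k A a) (Phi act (W.comul h) y) := by
  simp [mZero]

lemma mZero_tmul_tmul {n : ℕ} {h1 h2 : Fin n → H} {h : H}
    (hh : W.comul h = ∑ i, h1 i ⊗ₜ[k] h2 i) (a a' : A) (h' : H) :
    mZero W act (a ⊗ₜ[k] h) (a' ⊗ₜ[k] h')
      = ∑ i, (a * act (h1 i) a') ⊗ₜ[k] (h2 i * h') := by
  rw [mZero_apply, hh]
  simp only [map_sum, LinearMap.sum_apply, Phi_tmul_tmul, rTensor_tmul, mul_apply']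

/-- `θ (x ⊗ y) = (x · a')(y · c)`. -/
noncomputable def theta (a' c : A) : (H ⊗[k] H) →ₗ[k] A :=
  TensorProduct.lift ((LinearMap.mul k A).compl₁₂ (act.flip a') (act.flip c))

@[simp] lemma theta_tmul (a' c : A) (x y : H) :
    theta act a' c (x ⊗ₜ[k] y) = act x a' * act y c := by
  simp [theta]

section ModuleAlgebra

variable
  (hact_mul : ∀ (h h' : H) (a : A), act (h * h') a = act h (act h' a))
  (hact_one : ∀ a : A, act 1 a = a)
  (hma_mul : ∀ (h : H) (a b : A) (n : ℕ) (h1 h2 : Fin n → H),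
      W.comul h = ∑ i, h1 i ⊗ₜ[k] h2 i →
      act h (a * b) = ∑ i, act (h1 i) a * act (h2 i) b)
  (hma_one : ∀ h : H, act h 1 = act (W.εt h) 1)

include hma_mul in
lemma act_mul_eq_theta (g : H) (a' c : A) :
    act g (a' * c) = theta act a' c (W.comul g) := by
  obtain ⟨n, f1, f2, hrep⟩ := exists_rep (W.comul g)
  rw [hma_mul g a' c n f1 f2 hrep, hrep]
  simp only [map_sum, theta_tmul]

include hma_mul in
lemma mZero_exp (a a' c : A) (h h' : H) :
    rTensor H (LinearMap.mul k A a) (Phi act (W.comul h) ((a' * c) ⊗ₜ[k] h'))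
      = TensorProduct.map ((LinearMap.mul k A a) ∘ₗ theta act a' c) (LinearMap.mulRight k h')
          (rTensor H W.comul (W.comul h)) := by
  obtain ⟨n, u, v, hu⟩ := exists_rep (W.comul h)
  rw [hu]
  simp only [map_sum, LinearMap.sum_apply, Phi_tmul_tmul, rTensor_tmul, mul_apply',
    TensorProduct.map_tmul, LinearMap.comp_apply, mulRight_apply]
  refine Finset.sum_congr rfl fun i _ => ?_
  rw [act_mul_eq_theta W act hma_mul]

include hact_mul hact_one hma_mul in
lemma act_εt (w : H) (b : A) :
    act (W.εt w) b = act (W.εt w) 1 * b := by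
  obtain ⟨n1, e1, e2, he⟩ := exists_rep (W.comul 1)
  have hz : W.comul (W.εt w) = ∑ i, (e1 i * W.εt w) ⊗ₜ[k] e2 i := by
    rw [KH1a W he w, he, Finset.sum_mul]
    simp only [Algebra.TensorProduct.tmul_mul_tmul, mul_one]
  calc act (W.εt w) b = act (W.εt w) (1 * b) := by rw [one_mul]
    _ = ∑ i, act (e1 i * W.εt w) 1 * act (e2 i) b := hma_mul _ 1 b _ _ _ hz
    _ = ∑ i, act (e1 i) (act (W.εt w) 1) * act (e2 i) b := by
        simp only [hact_mul]
    _ = act 1 (act (W.εt w) 1 * b) := (hma_mul 1 _ b _ e1 e2 he).symm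
    _ = act (W.εt w) 1 * b := hact_one _

end ModuleAlgebra

end Smash

section Rel

variable (W : WeakHopfAlgebra k H)
variable {A : Type*} [Ring A] [Algebra k A] (act : H →ₗ[k] A →ₗ[k] A)

lemma gen_mem (a : A) (h w : H) :
    (a * act (W.εt w) 1) ⊗ₜ[k] h - a ⊗ₜ[k] (W.εt w * h)
      ∈ W.smashRel (LinearMap.mul k A) 1 act :=
  Submodule.subset_span ⟨a, h, W.εt w, ⟨w, rfl⟩, by simp [LinearMap.mul_apply']⟩

/-- `κ (y ⊗ t) = ε_t(yz)(th')`. -/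
noncomputable def kappa (z h' : H) : H ⊗[k] H →ₗ[k] H :=
  (LinearMap.mul' k H) ∘ₗ
    TensorProduct.map (W.εt ∘ₗ LinearMap.mulRight k z) (LinearMap.mulRight k h')

@[simp] lemma kappa_tmul (z h' y t : H) :
    kappa W z h' (y ⊗ₜ[k] t) = W.εt (y * z) * (t * h') := by
  simp [kappa]

lemma kappa_comul (w h' g : H) :
    kappa W (W.εt w) h' (W.comul g) = (g * W.εt w) * h' := by
  obtain ⟨n1, e1, e2, he⟩ := exists_rep (W.comul 1)
  obtain ⟨m, g1, g2, hg⟩ := exists_rep (W.comul g)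
  rw [hg]
  simp only [map_sum, kappa_tmul]
  calc ∑ a, W.εt (g1 a * W.εt w) * (g2 a * h')
      = (∑ a, W.εt (g1 a * W.εt w) * g2 a) * h' := by
        rw [Finset.sum_mul]
        simp only [mul_assoc]
    _ = (g * W.εt w) * h' := by rw [sum_εt_mul W he g hg w]

section MA

variable
  (hact_mul : ∀ (h h' : H) (a : A), act (h * h') a = act h (act h' a))
  (hact_one : ∀ a : A, act 1 a = a)
  (hma_mul : ∀ (h : H) (a b : A) (n : ℕ) (h1 h2 : Fin n → H),
      W.comul h = ∑ i, h1 i ⊗ₜ[k] h2 i →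
      act h (a * b) = ∑ i, act (h1 i) a * act (h2 i) b)
  (hma_one : ∀ h : H, act h 1 = act (W.εt h) 1)

include hact_mul hact_one hma_mul in
lemma mZero_rel_left (a : A) (h w : H) :
    mZero W act ((a * act (W.εt w) 1) ⊗ₜ[k] h - a ⊗ₜ[k] (W.εt w * h)) = 0 := by
  obtain ⟨n1, e1, e2, he⟩ := exists_rep (W.comul 1)
  rw [map_sub, sub_eq_zero]
  apply TensorProduct.ext'
  intro a' h'
  obtain ⟨n, u, v, hu⟩ := exists_rep (W.comul h)
  rw [mZero_apply, mZero_apply, comul_εt_mul W he w h, hu, Finset.mul_sum]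
  simp only [Algebra.TensorProduct.tmul_mul_tmul, one_mul, map_sum, LinearMap.sum_apply,
    Phi_tmul_tmul, rTensor_tmul, mul_apply']
  refine Finset.sum_congr rfl fun i _ => ?_
  conv_rhs => rw [hact_mul, act_εt W act hact_mul hact_one hma_mul]
  rw [mul_assoc]

include hact_mul hma_mul hma_one in
lemma mZero_rel_right (a : A) (h : H) (a' : A) (h' w : H) :
    mZero W act (a ⊗ₜ[k] h)
        ((a' * act (W.εt w) 1) ⊗ₜ[k] h' - a' ⊗ₜ[k] (W.εt w * h'))
      ∈ W.smashRel (LinearMap.mul k A) 1 act := by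
  set rel := W.smashRel (LinearMap.mul k A) 1 act with hrel
  rw [map_sub, mZero_apply, mZero_apply,
    mZero_exp W act hma_mul a a' (act (W.εt w) 1) h h']
  set Xi := TensorProduct.map ((LinearMap.mul k A a) ∘ₗ theta act a' (act (W.εt w) 1))
    (LinearMap.mulRight k h') with hXi
  set Om := TensorProduct.map ((LinearMap.mul k A a) ∘ₗ act.flip a') (kappa W (W.εt w) h')
    with hOm
  have claim1 : ∀ T : (H ⊗[k] H) ⊗[k] H,
      Xi T - Om ((TensorProduct.assoc k H H H) T) ∈ rel := by
    intro T
    induction T using TensorProduct.induction_on with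
    | zero => simpa using zero_mem rel
    | add p q hp hq =>
      have hco : Xi (p + q) - Om ((TensorProduct.assoc k H H H) (p + q))
          = (Xi p - Om ((TensorProduct.assoc k H H H) p))
            + (Xi q - Om ((TensorProduct.assoc k H H H) q)) := by
        simp only [map_add]; abel
      rw [hco]; exact add_mem hp hq
    | tmul u t =>
      induction u using TensorProduct.induction_on with
      | zero => simpa [zero_tmul] using zero_mem rel
      | add u1 u2 h1 h2 =>
        have hco : Xi ((u1 + u2) ⊗ₜ[k] t)
              - Om ((TensorProduct.assoc k H H H) ((u1 + u2) ⊗ₜ[k] t))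
            = (Xi (u1 ⊗ₜ[k] t) - Om ((TensorProduct.assoc k H H H) (u1 ⊗ₜ[k] t)))
              + (Xi (u2 ⊗ₜ[k] t) - Om ((TensorProduct.assoc k H H H) (u2 ⊗ₜ[k] t))) := by
          rw [add_tmul]
          simp only [map_add]; abel
        rw [hco]; exact add_mem h1 h2
      | tmul x y =>
        have e1 : Xi ((x ⊗ₜ[k] y) ⊗ₜ[k] t)
            = (((a * act x a') * act (W.εt (y * W.εt w)) 1)) ⊗ₜ[k] (t * h') := by
          rw [hXi]
          simp only [TensorProduct.map_tmul, LinearMap.comp_apply, theta_tmul,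
            mulRight_apply, mul_apply']
          rw [← hact_mul, hma_one (y * W.εt w), mul_assoc]
        have e2 : Om ((TensorProduct.assoc k H H H) ((x ⊗ₜ[k] y) ⊗ₜ[k] t))
            = (a * act x a') ⊗ₜ[k] (W.εt (y * W.εt w) * (t * h')) := by
          rw [hOm]
          simp only [assoc_tmul, TensorProduct.map_tmul, LinearMap.comp_apply,
            flip_apply, kappa_tmul, mul_apply']
        rw [e1, e2]
        exact gen_mem W act (a * act x a') (t * h') (y * W.εt w)
  have hsec : rTensor H (LinearMap.mul k A a) (Phi act (W.comul h) (a' ⊗ₜ[k] (W.εt w * h')))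
      = Om ((TensorProduct.assoc k H H H) (rTensor H W.comul (W.comul h))) := by
    rw [coassoc_apply]
    obtain ⟨n, u, v, hu⟩ := exists_rep (W.comul h)
    rw [hu]
    simp only [map_sum, lTensor_tmul, LinearMap.sum_apply, Phi_tmul_tmul, rTensor_tmul,
      mul_apply', hOm, TensorProduct.map_tmul, LinearMap.comp_apply, flip_apply]
    refine Finset.sum_congr rfl fun i _ => ?_
    rw [kappa_comul W w h' (v i), mul_assoc]
  rw [hsec]
  exact claim1 _

include hact_mul in
lemma Phi_twist {m : ℕ} {r s : Fin m → H} {h' : H}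
    (hr : W.comul h' = ∑ b, r b ⊗ₜ[k] s b) (t : H ⊗[k] H) (a'' : A) (h'' : H) :
    Phi act (t * W.comul h') (a'' ⊗ₜ[k] h'')
      = ∑ b, Phi act t ((act (r b) a'') ⊗ₜ[k] (s b * h'')) := by
  induction t using TensorProduct.induction_on with
  | zero => simp
  | add t1 t2 h1 h2 =>
    rw [add_mul, map_add, LinearMap.add_apply, h1, h2, ← Finset.sum_add_distrib]
    simp only [map_add, LinearMap.add_apply]
  | tmul x y =>
    rw [hr, Finset.mul_sum]
    simp only [Algebra.TensorProduct.tmul_mul_tmul, map_sum, LinearMap.sum_apply,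
      Phi_tmul_tmul]
    refine Finset.sum_congr rfl fun b _ => ?_
    rw [hact_mul, mul_assoc]

set_option synthInstance.maxHeartbeats 400000 in
lemma Xi_step (a a' c : A) (d : H) (x : H) (t : H ⊗[k] H) :
    rTensor H (LinearMap.mul k A (a * act x a')) (Phi act t (c ⊗ₜ[k] d))
      = TensorProduct.map ((LinearMap.mul k A a) ∘ₗ theta act a' c) (LinearMap.mulRight k d)
          ((TensorProduct.assoc k H H H).symm (x ⊗ₜ[k] t)) := by
  induction t using TensorProduct.induction_on with
  | zero =>
    rw [tmul_zero, map_zero (Phi act), LinearMap.zero_apply,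
      map_zero (rTensor H (LinearMap.mul k A (a * act x a'))),
      map_zero ((TensorProduct.assoc k H H H).symm : _ ≃ₗ[k] _),
      map_zero]
  | add t1 t2 h1 h2 =>
    rw [tmul_add, map_add (Phi act), LinearMap.add_apply,
      map_add (rTensor H (LinearMap.mul k A (a * act x a'))),
      map_add ((TensorProduct.assoc k H H H).symm : _ ≃ₗ[k] _), map_add, h1, h2]
  | tmul y t' =>
    simp only [Phi_tmul_tmul, assoc_symm_tmul, TensorProduct.map_tmul, rTensor_tmul,
      mul_apply', LinearMap.comp_apply, theta_tmul, mulRight_apply, mul_assoc]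

include hact_mul hma_mul in
lemma mZero_assoc (x y zz : A ⊗[k] H) :
    mZero W act (mZero W act x y) zz = mZero W act x (mZero W act y zz) := by
  induction x using TensorProduct.induction_on with
  | zero => simp
  | add x1 x2 hx1 hx2 => simp only [map_add, LinearMap.add_apply, hx1, hx2]
  | tmul a h =>
    induction y using TensorProduct.induction_on with
    | zero => simp
    | add y1 y2 hy1 hy2 => simp only [map_add, LinearMap.add_apply, hy1, hy2]
    | tmul a' h' =>
      induction zz using TensorProduct.induction_on with
      | zero => simp
      | add z1 z2 hz1 hz2 => simp only [map_add, hz1, hz2]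
      | tmul a'' h'' =>
        obtain ⟨nU, u, v, hu⟩ := exists_rep (W.comul h)
        obtain ⟨nR, r, s, hr⟩ := exists_rep (W.comul h')
        rw [mZero_tmul_tmul W act hu a a' h', mZero_tmul_tmul W act hr a' a'' h'',
          map_sum, map_sum, LinearMap.sum_apply]
        have lhs_i : ∀ i, mZero W act ((a * act (u i) a') ⊗ₜ[k] (v i * h')) (a'' ⊗ₜ[k] h'')
            = ∑ b, rTensor H (LinearMap.mul k A (a * act (u i) a'))
                (Phi act (W.comul (v i)) ((act (r b) a'') ⊗ₜ[k] (s b * h''))) := by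
          intro i
          rw [mZero_apply, W.comul_mul, Phi_twist W act hact_mul hr, map_sum]
        have rhs_b : ∀ b, mZero W act (a ⊗ₜ[k] h) ((a' * act (r b) a'') ⊗ₜ[k] (s b * h''))
            = ∑ i, rTensor H (LinearMap.mul k A (a * act (u i) a'))
                (Phi act (W.comul (v i)) ((act (r b) a'') ⊗ₜ[k] (s b * h''))) := by
          intro b
          rw [mZero_apply, mZero_exp W act hma_mul a a' (act (r b) a'') h (s b * h''),
            ← (TensorProduct.assoc k H H H).symm_apply_apply
              (rTensor H W.comul (W.comul h)),
            coassoc_apply W h, hu]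
          simp only [map_sum, lTensor_tmul]
          exact Finset.sum_congr rfl fun i _ => (Xi_step act a a' _ _ _ _).symm
        calc ∑ i, mZero W act ((a * act (u i) a') ⊗ₜ[k] (v i * h')) (a'' ⊗ₜ[k] h'')
            = ∑ i, ∑ b, rTensor H (LinearMap.mul k A (a * act (u i) a'))
                (Phi act (W.comul (v i)) ((act (r b) a'') ⊗ₜ[k] (s b * h''))) :=
              Finset.sum_congr rfl fun i _ => lhs_i i
          _ = ∑ b, ∑ i, rTensor H (LinearMap.mul k A (a * act (u i) a'))
                (Phi act (W.comul (v i)) ((act (r b) a'') ⊗ₜ[k] (s b * h''))) := by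
              rw [Finset.sum_comm]
          _ = ∑ b, mZero W act (a ⊗ₜ[k] h) ((a' * act (r b) a'') ⊗ₜ[k] (s b * h'')) :=
              Finset.sum_congr rfl fun b _ => (rhs_b b).symm

include hact_one hma_mul hma_one in
lemma left_unit_mem (a : A) (h : H) :
    mZero W act ((1:A) ⊗ₜ[k] (1:H)) (a ⊗ₜ[k] h) - a ⊗ₜ[k] h
      ∈ W.smashRel (LinearMap.mul k A) 1 act := by
  obtain ⟨n1, e1, e2, he⟩ := exists_rep (W.comul 1)
  have h1 : mZero W act ((1:A) ⊗ₜ[k] (1:H)) (a ⊗ₜ[k] h)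
      = ∑ i, act (e1 i) a ⊗ₜ[k] (W.εt (e2 i) * h) := by
    rw [mZero_tmul_tmul W act he 1 a h]
    simp only [one_mul]
    have h2 : ∑ i, act (e1 i) a ⊗ₜ[k] (e2 i * h)
        = TensorProduct.map (act.flip a) (LinearMap.mulRight k h) (W.comul 1) := by
      rw [he]
      simp only [map_sum, TensorProduct.map_tmul, flip_apply, mulRight_apply]
    have h3 : TensorProduct.map (act.flip a) (LinearMap.mulRight k h) (W.comul 1)
        = ∑ i, act (e1 i) a ⊗ₜ[k] (W.εt (e2 i) * h) := by
      rw [← I2_one W he]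
      simp only [map_sum, TensorProduct.map_tmul, flip_apply, mulRight_apply]
    rw [h2, h3]
  have hsum : ∑ i, ((act (e1 i) a * act (W.εt (e2 i)) 1) ⊗ₜ[k] h
        - act (e1 i) a ⊗ₜ[k] (W.εt (e2 i) * h))
      ∈ W.smashRel (LinearMap.mul k A) 1 act :=
    Submodule.sum_mem _ fun i _ => gen_mem W act (act (e1 i) a) h (e2 i)
  have hcol : ∑ i, (act (e1 i) a * act (W.εt (e2 i)) 1) ⊗ₜ[k] h = a ⊗ₜ[k] h := by
    calc ∑ i, (act (e1 i) a * act (W.εt (e2 i)) 1) ⊗ₜ[k] h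
        = (∑ i, act (e1 i) a * act (e2 i) 1) ⊗ₜ[k] h := by
          rw [sum_tmul]
          exact Finset.sum_congr rfl fun i _ => by rw [← hma_one (e2 i)]
      _ = (act 1 (a * 1)) ⊗ₜ[k] h := by rw [hma_mul 1 a 1 n1 e1 e2 he]
      _ = a ⊗ₜ[k] h := by rw [mul_one, hact_one]
  have final : mZero W act ((1:A) ⊗ₜ[k] (1:H)) (a ⊗ₜ[k] h) - a ⊗ₜ[k] h
      = -(∑ i, ((act (e1 i) a * act (W.εt (e2 i)) 1) ⊗ₜ[k] h
          - act (e1 i) a ⊗ₜ[k] (W.εt (e2 i) * h))) := by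
    rw [h1, Finset.sum_sub_distrib, neg_sub, hcol]
  rw [final]
  exact neg_mem hsum

include hma_one in
lemma right_unit_mem (a : A) (h : H) :
    mZero W act (a ⊗ₜ[k] h) ((1:A) ⊗ₜ[k] (1:H)) - a ⊗ₜ[k] h
      ∈ W.smashRel (LinearMap.mul k A) 1 act := by
  obtain ⟨n1, e1, e2, he⟩ := exists_rep (W.comul 1)
  obtain ⟨n, u, v, hu⟩ := exists_rep (W.comul h)
  have h1 : mZero W act (a ⊗ₜ[k] h) ((1:A) ⊗ₜ[k] (1:H))
      = ∑ i, (a * act (W.εt (u i)) 1) ⊗ₜ[k] v i := by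
    rw [mZero_tmul_tmul W act hu a 1 1]
    exact Finset.sum_congr rfl fun i _ => by rw [hma_one (u i), mul_one]
  have hcol : ∑ i, a ⊗ₜ[k] (W.εt (u i) * v i) = a ⊗ₜ[k] h := by
    rw [← tmul_sum, εt_mul_sum W he h hu]
  have hsum : ∑ i, ((a * act (W.εt (u i)) 1) ⊗ₜ[k] (v i) - a ⊗ₜ[k] (W.εt (u i) * v i))
      ∈ W.smashRel (LinearMap.mul k A) 1 act :=
    Submodule.sum_mem _ fun i _ => gen_mem W act a (v i) (u i)
  have final : mZero W act (a ⊗ₜ[k] h) ((1:A) ⊗ₜ[k] (1:H)) - a ⊗ₜ[k] h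
      = ∑ i, ((a * act (W.εt (u i)) 1) ⊗ₜ[k] (v i) - a ⊗ₜ[k] (W.εt (u i) * v i)) := by
    rw [h1, Finset.sum_sub_distrib, hcol]
  rw [final]
  exact hsum

end MA

end Rel

end WeakHopfSmashAux

open WeakHopfSmashAux

open WeakHopfAlgebra in
/-- Let `H` be a weak Hopf algebra and `A` a left `H`-module algebra.  Then the smash product
`A # H := A ⊗_{H_t} H`, with multiplication `(a # h)(a' # h') = a(h₁·a') # h₂h'` and unit
`1_A # 1_H`, is a unital associative algebra.  The multiplication is described on classes of
pure tensors through arbitrary finite Sweedler representations of `Δ(h)`. -/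
theorem weakHopf_smash_product_algebra {k H : Type*} [CommRing k] [Ring H] [Algebra k H]
    (W : WeakHopfAlgebra k H) {A : Type*} [Ring A] [Algebra k A]
    (act : H →ₗ[k] A →ₗ[k] A)
    -- `A` is a left `H`-module:
    (hact_mul : ∀ (h h' : H) (a : A), act (h * h') a = act h (act h' a))
    (hact_one : ∀ a : A, act 1 a = a)
    -- `A` is a left `H`-module algebra:
    (hma_mul : ∀ (h : H) (a b : A) (n : ℕ) (h1 h2 : Fin n → H),
      W.comul h = ∑ i, h1 i ⊗ₜ[k] h2 i →
      act h (a * b) = ∑ i, act (h1 i) a * act (h2 i) b)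
    (hma_one : ∀ h : H, act h 1 = act (W.εt h) 1) :
    letI rel := W.smashRel (LinearMap.mul k A) (1 : A) act
    ∃ m : ((A ⊗[k] H) ⧸ rel) →ₗ[k] ((A ⊗[k] H) ⧸ rel) →ₗ[k] ((A ⊗[k] H) ⧸ rel),
      -- description of the multiplication `(a # h)(a' # h') = a(h₁·a') # h₂h'`:
      (∀ (a a' : A) (h h' : H) (n : ℕ) (h1 h2 : Fin n → H),
        W.comul h = ∑ i, h1 i ⊗ₜ[k] h2 i →
        m (rel.mkQ (a ⊗ₜ[k] h)) (rel.mkQ (a' ⊗ₜ[k] h'))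
          = rel.mkQ (∑ i, (a * act (h1 i) a') ⊗ₜ[k] (h2 i * h'))) ∧
      -- associativity:
      (∀ x y z, m (m x y) z = m x (m y z)) ∧
      -- `1_A # 1_H` is a unit:
      (∀ x, m (rel.mkQ ((1 : A) ⊗ₜ[k] (1 : H))) x = x) ∧
      (∀ x, m x (rel.mkQ ((1 : A) ⊗ₜ[k] (1 : H))) = x) := by
  set rel : Submodule k (A ⊗[k] H) := W.smashRel (LinearMap.mul k A) (1 : A) act with hrel
  have hker1 : rel ≤ LinearMap.ker (mZero W act) := by
    refine Submodule.span_le.mpr ?_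
    rintro x ⟨a, h, z, ⟨w, rfl⟩, rfl⟩
    refine LinearMap.mem_ker.mpr ?_
    simpa using mZero_rel_left W act hact_mul hact_one hma_mul a h w
  set g : (A ⊗[k] H) →ₗ[k] (A ⊗[k] H) →ₗ[k] ((A ⊗[k] H) ⧸ rel) :=
    (mZero W act).compr₂ rel.mkQ with hg
  have hker_g : rel ≤ LinearMap.ker g := by
    intro r hr
    rw [LinearMap.mem_ker]
    have hz : mZero W act r = 0 := LinearMap.mem_ker.mp (hker1 hr)
    apply LinearMap.ext
    intro y
    simp [hg, LinearMap.compr₂_apply, hz]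
  set G1 : ((A ⊗[k] H) ⧸ rel) →ₗ[k] (A ⊗[k] H) →ₗ[k] ((A ⊗[k] H) ⧸ rel) :=
    rel.liftQ g hker_g with hG1def
  have hG1 : ∀ (x y : A ⊗[k] H), G1 (rel.mkQ x) y = rel.mkQ (mZero W act x y) := by
    intro x y
    rw [hG1def, Submodule.mkQ_apply, Submodule.liftQ_apply]
    simp [hg, LinearMap.compr₂_apply]
  have hwd2 : ∀ (x : A ⊗[k] H), ∀ r ∈ rel, mZero W act x r ∈ rel := by
    intro x
    induction x using TensorProduct.induction_on with
    | zero => intro r hr; rw [map_zero, LinearMap.zero_apply]; exact zero_mem rel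
    | add x1 x2 h1 h2 =>
      intro r hr
      rw [map_add, LinearMap.add_apply]
      exact add_mem (h1 r hr) (h2 r hr)
    | tmul a h =>
      intro r hr
      have hle : rel ≤ Submodule.comap (mZero W act (a ⊗ₜ[k] h)) rel := by
        refine Submodule.span_le.mpr ?_
        rintro x ⟨a', h', z, ⟨w, rfl⟩, rfl⟩
        simpa using mZero_rel_right W act hact_mul hma_mul hma_one a h a' h' w
      exact hle hr
  have hker_G2 : rel ≤ LinearMap.ker G1.flip := by
    intro r hr
    rw [LinearMap.mem_ker]
    apply LinearMap.ext
    intro q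
    obtain ⟨x, rfl⟩ := rel.mkQ_surjective q
    rw [LinearMap.flip_apply, hG1, LinearMap.zero_apply, Submodule.mkQ_apply,
      Submodule.Quotient.mk_eq_zero]
    exact hwd2 x r hr
  set m : ((A ⊗[k] H) ⧸ rel) →ₗ[k] ((A ⊗[k] H) ⧸ rel) →ₗ[k] ((A ⊗[k] H) ⧸ rel) :=
    (rel.liftQ G1.flip hker_G2).flip with hmdef
  have hm : ∀ x y : A ⊗[k] H, m (rel.mkQ x) (rel.mkQ y) = rel.mkQ (mZero W act x y) := by
    intro x y
    rw [hmdef, LinearMap.flip_apply, Submodule.mkQ_apply rel y, Submodule.liftQ_apply,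
      LinearMap.flip_apply, hG1]
  refine ⟨m, ?_, ?_, ?_, ?_⟩
  · intro a a' h h' n h1 h2 hrep
    rw [hm, mZero_tmul_tmul W act hrep a a' h']
  · intro x y z
    obtain ⟨x0, rfl⟩ := rel.mkQ_surjective x
    obtain ⟨y0, rfl⟩ := rel.mkQ_surjective y
    obtain ⟨z0, rfl⟩ := rel.mkQ_surjective z
    rw [hm, hm, hm, hm, mZero_assoc W act hact_mul hma_mul]
  · intro x
    obtain ⟨x0, rfl⟩ := rel.mkQ_surjective x
    induction x0 using TensorProduct.induction_on with
    | zero => rw [map_zero, map_zero]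
    | add y1 y2 hy1 hy2 => rw [map_add, map_add, hy1, hy2]
    | tmul a h =>
      rw [hm, Submodule.mkQ_apply, Submodule.mkQ_apply, Submodule.Quotient.eq]
      exact left_unit_mem W act hact_one hma_mul hma_one a h
  · intro x
    obtain ⟨x0, rfl⟩ := rel.mkQ_surjective x
    induction x0 using TensorProduct.induction_on with
    | zero => rw [map_zero, map_zero, LinearMap.zero_apply]
    | add y1 y2 hy1 hy2 => rw [map_add, map_add, LinearMap.add_apply, hy1, hy2]
    | tmul a h =>
      rw [hm, Submodule.mkQ_apply, Submodule.mkQ_apply, Submodule.Quotient.eq]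
      exact right_unit_mem W act hma_one a h
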